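/- Let E be a measurable space, 𝒞 = {1,...,C} a finite label set, and (X_0, C_0), (X_1, C_1), ..., (X_n, C_n) i.i.d. random pairs in E × 𝒞. Let T be a nonempty finite set of checkpoints and, for each t ∈ T, let s_t : E × 𝒞 → ℝ be a measurable score function. For each t ∈ T and c ∈ 𝒞 define p_{t,c}(X_0) = (1 + #{i ∈ {1,...,n} : s_t(X_0, c) ≤ s_t(X_i, C_i)}) / (n + 1), and set Γ_t(X_0) = {c ∈ 𝒞 : p_{t,c}(X_0) > α} with α = (1 − p_targ)/|T| for a given p_targ ∈ (0,1). Then for every measurable stopping rule τ mapping the outcome (i.e., the test input and calibration data) to an element of T, Pr(C_0 ∈ Γ_τ(X_0)) ≥ p_targ. -/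

import Mathlib

open MeasureTheory ProbabilityTheory
open scoped Classical ENNReal

section Aux

variable {Ω : Type*} [MeasurableSpace Ω]

/-- Deterministic rank lemma: at most `k` indices have at most `k` values above them. -/
lemma aux_rank_card {m k : ℕ} (v : Fin m → ℝ) :
    (Finset.univ.filter fun j : Fin m =>
      (Finset.univ.filter fun i : Fin m => v j ≤ v i).card ≤ k).card ≤ k := by
  set S := Finset.univ.filter fun j : Fin m =>
      (Finset.univ.filter fun i : Fin m => v j ≤ v i).card ≤ k with hS
  rcases S.eq_empty_or_nonempty with h | h
  · simp [h]
  · obtain ⟨j0, hj0S, hj0min⟩ := S.exists_min_image v h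
    have hsub : S ⊆ Finset.univ.filter fun i => v j0 ≤ v i := by
      intro j hj
      simp only [Finset.mem_filter, Finset.mem_univ, true_and]
      exact hj0min j hj
    have h1 := Finset.card_le_card hsub
    have h2 : (Finset.univ.filter fun i : Fin m => v j0 ≤ v i).card ≤ k := by
      simpa [hS] using (Finset.mem_filter.mp hj0S).2
    omega

lemma aux_B_meas {m k : ℕ} :
    MeasurableSet {v : Fin (m+1) → ℝ |
      (Finset.univ.filter fun i => v 0 ≤ v i).card ≤ k} := by
  have hmeas : Measurable fun v : Fin (m+1) → ℝ =>
      (Finset.univ.filter fun i => v 0 ≤ v i).card := by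
    simp_rw [Finset.card_filter]
    exact Finset.measurable_sum _ fun i _ =>
      Measurable.ite (measurableSet_le (measurable_pi_apply 0) (measurable_pi_apply i))
        measurable_const measurable_const
  exact hmeas measurableSet_Iic

lemma aux_joint (μ : Measure Ω) [IsProbabilityMeasure μ] {m : ℕ}
    (V : Fin (m+1) → Ω → ℝ) (hV : ∀ i, Measurable (V i))
    (hind : iIndepFun V μ) :
    μ.map (fun ω i => V i ω) = Measure.pi fun i => μ.map (V i) := by
  have : ∀ i, IsProbabilityMeasure (μ.map (V i)) :=
    fun i => Measure.isProbabilityMeasure_map (hV i).aemeasurable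
  refine (Measure.pi_eq fun sets hsets => ?_).symm
  rw [Measure.map_apply (measurable_pi_lambda _ hV) (MeasurableSet.univ_pi hsets)]
  have h1 : (fun ω i => V i ω) ⁻¹' Set.univ.pi sets = ⋂ i ∈ Finset.univ, V i ⁻¹' sets i := by
    ext ω; simp [Set.mem_pi]
  rw [h1, hind.measure_inter_preimage_eq_mul Finset.univ (fun i _ => hsets i)]
  exact Finset.prod_congr rfl fun i _ =>
    (Measure.map_apply (hV i) (hsets i)).symm

/-- A product of identical probability measures is permutation invariant. -/
lemma aux_pi_perm {m : ℕ} (ν : Measure ℝ) [IsProbabilityMeasure ν]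
    (e : Fin (m+1) ≃ Fin (m+1)) :
    (Measure.pi fun _ : Fin (m+1) => ν).map (fun v i => v (e i))
      = Measure.pi fun _ : Fin (m+1) => ν := by
  have hψ : Measurable fun v : Fin (m+1) → ℝ => fun i => v (e i) :=
    measurable_pi_lambda _ fun i => measurable_pi_apply (e i)
  refine (Measure.pi_eq fun sets hsets => ?_).symm
  rw [Measure.map_apply hψ (MeasurableSet.univ_pi hsets)]
  have h1 : (fun v : Fin (m+1) → ℝ => fun i => v (e i)) ⁻¹' Set.univ.pi sets
      = Set.univ.pi fun j => sets (e.symm j) := by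
    ext v
    simp only [Set.mem_preimage, Set.mem_pi, Set.mem_univ, true_imp_iff]
    exact ⟨fun h j => by simpa using h (e.symm j), fun h i => by simpa using h (e i)⟩
  rw [h1, Measure.pi_pi]
  exact Equiv.prod_comp e.symm fun j => ν (sets j)

lemma aux_perm (μ : Measure Ω) [IsProbabilityMeasure μ] {m : ℕ}
    (V : Fin (m+1) → Ω → ℝ) (hV : ∀ i, Measurable (V i))
    (hind : iIndepFun V μ)
    (hid : ∀ i, IdentDistrib (V i) (V 0) μ μ)
    (e : Fin (m+1) ≃ Fin (m+1)) {B : Set (Fin (m+1) → ℝ)} (hB : MeasurableSet B) :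
    μ {ω | (fun i => V (e i) ω) ∈ B} = μ {ω | (fun i => V i ω) ∈ B} := by
  have hν : IsProbabilityMeasure (μ.map (V 0)) :=
    Measure.isProbabilityMeasure_map (hV 0).aemeasurable
  have hjoint : μ.map (fun ω i => V i ω) = Measure.pi fun _ : Fin (m+1) => μ.map (V 0) := by
    rw [aux_joint μ V hV hind]
    congr 1
    funext i
    exact (hid i).map_eq
  have hW : Measurable fun ω i => V i ω := measurable_pi_lambda _ hV
  have hψ : Measurable fun v : Fin (m+1) → ℝ => fun i => v (e i) :=
    measurable_pi_lambda _ fun i => measurable_pi_apply (e i)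
  have hset : {ω | (fun i => V (e i) ω) ∈ B}
      = (fun ω i => V i ω) ⁻¹' ((fun v : Fin (m+1) → ℝ => fun i => v (e i)) ⁻¹' B) := rfl
  rw [hset, ← Measure.map_apply hW (hψ hB), hjoint,
    ← Measure.map_apply hψ hB, aux_pi_perm (μ.map (V 0)) e]
  rw [show {ω | (fun i => V i ω) ∈ B} = (fun ω i => V i ω) ⁻¹' B from rfl,
    ← Measure.map_apply hW hB, hjoint]

lemma aux_sum (μ : Measure Ω) {m k : ℕ} (A : Fin m → Set Ω)
    (hA : ∀ j, MeasurableSet (A j))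
    (h : ∀ ω, (Finset.univ.filter fun j => ω ∈ A j).card ≤ k) :
    ∑ j, μ (A j) ≤ k * μ Set.univ := by
  have h1 : ∑ j, μ (A j) = ∫⁻ ω, ∑ j, (A j).indicator (1 : Ω → ℝ≥0∞) ω ∂μ := by
    rw [lintegral_finset_sum _ fun j _ => measurable_one.indicator (hA j)]
    exact Finset.sum_congr rfl fun j _ => (lintegral_indicator_one (hA j)).symm
  rw [h1]
  calc ∫⁻ ω, ∑ j, (A j).indicator (1 : Ω → ℝ≥0∞) ω ∂μ
      ≤ ∫⁻ _, (k : ℝ≥0∞) ∂μ := by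
        refine lintegral_mono fun ω => ?_
        have h2 : ∑ j, (A j).indicator (1 : Ω → ℝ≥0∞) ω
            = ((Finset.univ.filter fun j => ω ∈ A j).card : ℝ≥0∞) := by
          rw [Finset.card_filter]
          push_cast
          exact Finset.sum_congr rfl fun j _ => by
            by_cases hj : ω ∈ A j <;> simp [Set.indicator_apply, hj]
        rw [h2]
        exact (Nat.cast_le.mpr (h ω) : ((Finset.univ.filter fun j => ω ∈ A j).card : ℝ≥0∞) ≤ k)
    _ = k * μ Set.univ := lintegral_const _

lemma aux_main (μ : Measure Ω) [IsProbabilityMeasure μ] {m : ℕ}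
    (V : Fin (m+1) → Ω → ℝ) (hV : ∀ i, Measurable (V i))
    (hind : iIndepFun V μ)
    (hid : ∀ i, IdentDistrib (V i) (V 0) μ μ) (k : ℕ) :
    μ {ω | (Finset.univ.filter fun i => V 0 ω ≤ V i ω).card ≤ k}
      ≤ (k : ℝ≥0∞) / ((m : ℝ≥0∞) + 1) := by
  classical
  set B : Set (Fin (m+1) → ℝ) :=
    {v | (Finset.univ.filter fun i => v 0 ≤ v i).card ≤ k} with hBdef
  have hB : MeasurableSet B := aux_B_meas
  set A : Fin (m+1) → Set Ω :=
    fun j => {ω | (Finset.univ.filter fun i => V j ω ≤ V i ω).card ≤ k} with hAdef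
  have hAe : ∀ j, A j = {ω | (fun i => V (Equiv.swap 0 j i) ω) ∈ B} := by
    intro j
    ext ω
    simp only [hAdef, hBdef, Set.mem_setOf_eq]
    have hcard : (Finset.univ.filter fun i : Fin (m+1) =>
          V (Equiv.swap 0 j 0) ω ≤ V (Equiv.swap 0 j i) ω).card
        = (Finset.univ.filter fun i => V j ω ≤ V i ω).card := by
      simp only [Equiv.swap_apply_left]
      exact Finset.card_equiv (Equiv.swap 0 j) fun i => by simp
    exact (iff_of_eq (congrArg (· ≤ k) hcard)).symm
  have hAmeas : ∀ j, MeasurableSet (A j) := by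
    intro j
    rw [hAe j]
    exact (measurable_pi_lambda _ fun i => hV _) hB
  have hAeq : ∀ j, μ (A j) = μ (A 0) := by
    intro j
    have h0 : A 0 = {ω | (fun i => V i ω) ∈ B} := by
      rw [hAe 0]
      simp
    rw [hAe j, aux_perm μ V hV hind hid (Equiv.swap 0 j) hB, ← h0]
  have hsum : ∑ j, μ (A j) ≤ k * μ Set.univ := by
    refine aux_sum μ A hAmeas fun ω => ?_
    simp only [hAdef, Set.mem_setOf_eq]
    exact aux_rank_card (fun i => V i ω)
  rw [Finset.sum_congr rfl fun j _ => hAeq j, Finset.sum_const, Finset.card_univ,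
    Fintype.card_fin, measure_univ, mul_one, nsmul_eq_mul] at hsum
  have hA0 : {ω | (Finset.univ.filter fun i => V 0 ω ≤ V i ω).card ≤ k} = A 0 := rfl
  rw [hA0, ENNReal.le_div_iff_mul_le
    (Or.inl (by simp))
    (Or.inl (by simp))]
  calc μ (A 0) * ((m : ℝ≥0∞) + 1) = ((m+1 : ℕ) : ℝ≥0∞) * μ (A 0) := by
        push_cast; ring
    _ ≤ k := hsum

lemma aux_card_split {m : ℕ} (q : Fin (m+1) → Prop) (hq : q 0) :
    (Finset.univ.filter fun i => q i).card
      = 1 + (Finset.univ.filter fun i => i ≠ 0 ∧ q i).card := by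
  have h : (Finset.univ.filter fun i => q i)
      = insert 0 (Finset.univ.filter fun i => i ≠ 0 ∧ q i) := by
    ext i
    by_cases hi : i = 0 <;> simp [hi, hq]
  rw [h, Finset.card_insert_of_notMem (by simp)]
  omega

end Aux

/-- Let `(X 0, C 0), ..., (X n, C n)` (written `Z i = (X i, C i)`) be i.i.d.
random pairs in `E × 𝒞` with `𝒞 = Fin C`, let `T` be a nonempty finite set of checkpoints,
and for each `t ∈ T` let `s t : E × 𝒞 → ℝ` be a measurable score function. Define the
conformal p-values `p_{t,c}(X 0) = (1 + #{i ∈ {1,...,n} : s t (X 0, c) ≤ s t (X i, C i)})/(n+1)`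
and prediction sets `Γ_t(X 0) = {c : p_{t,c}(X 0) > α}` with `α = (1 − p_targ)/|T|`,
`p_targ ∈ (0,1)`. Then for every measurable stopping rule `τ` (mapping the outcome to an
element of `T`), `Pr(C 0 ∈ Γ_{τ}(X 0)) ≥ p_targ`. -/
theorem spikecp_reliability
    {Ω E T : Type*} [MeasurableSpace Ω] [MeasurableSpace E]
    (μ : Measure Ω) [IsProbabilityMeasure μ]
    [Fintype T] [Nonempty T] [MeasurableSpace T] [MeasurableSingletonClass T]
    (n C : ℕ) (hC : 0 < C)
    (Z : Fin (n + 1) → Ω → E × Fin C)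
    (hmeas : ∀ i, Measurable (Z i))
    (hindep : iIndepFun Z μ)
    (hident : ∀ i, IdentDistrib (Z i) (Z 0) μ μ)
    (s : T → E × Fin C → ℝ) (hs : ∀ t, Measurable (s t))
    (ptarg : ℝ) (hptarg : ptarg ∈ Set.Ioo (0 : ℝ) 1)
    (τ : Ω → T) (hτ : Measurable τ) :
    ENNReal.ofReal ptarg ≤
      μ {ω | (Z 0 ω).2 ∈ {c : Fin C |
        (1 - ptarg) / (Fintype.card T : ℝ) <
          (1 + ((Finset.univ.filter
              fun i : Fin (n + 1) => i ≠ 0 ∧ s (τ ω) ((Z 0 ω).1, c) ≤ s (τ ω) (Z i ω)).card : ℝ))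
            / ((n : ℝ) + 1)}} := by
  classical
  obtain ⟨hp0, hp1⟩ := hptarg
  have hTpos : (0:ℝ) < (Fintype.card T : ℝ) := by
    exact_mod_cast Fintype.card_pos
  set α : ℝ := (1 - ptarg) / (Fintype.card T : ℝ) with hαdef
  have hα0 : 0 < α := div_pos (by linarith) hTpos
  set k : ℕ := ⌊α * ((n:ℝ)+1)⌋₊ with hkdef
  set G : Set Ω := {ω | (Z 0 ω).2 ∈ {c : Fin C |
        α < (1 + ((Finset.univ.filter
              fun i : Fin (n + 1) => i ≠ 0 ∧ s (τ ω) ((Z 0 ω).1, c) ≤ s (τ ω) (Z i ω)).card : ℝ))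
            / ((n : ℝ) + 1)}} with hGdef
  set D : T → Set Ω := fun t =>
    {ω | (Finset.univ.filter fun i : Fin (n+1) => s t (Z 0 ω) ≤ s t (Z i ω)).card ≤ k}
    with hDdef
  have hn1 : (0:ℝ) < (n:ℝ) + 1 := by positivity
  have hGc : Gᶜ ⊆ ⋃ t, D t := by
    intro ω hω
    simp only [hGdef, Set.mem_compl_iff, Set.mem_setOf_eq, not_lt] at hω
    refine Set.mem_iUnion.mpr ⟨τ ω, ?_⟩
    simp only [hDdef, Set.mem_setOf_eq]
    have hz : ((Z 0 ω).1, (Z 0 ω).2) = Z 0 ω := rfl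
    rw [hz] at hω
    have hsplit := aux_card_split
      (fun i : Fin (n+1) => s (τ ω) (Z 0 ω) ≤ s (τ ω) (Z i ω)) (le_refl _)
    refine Nat.le_floor ?_
    rw [hsplit]
    push_cast
    rw [div_le_iff₀ hn1] at hω
    linarith
  have hD : ∀ t, μ (D t) ≤ ENNReal.ofReal α := by
    intro t
    have hbound := aux_main μ (fun i ω => s t (Z i ω))
      (fun i => (hs t).comp (hmeas i))
      (hindep.comp (fun _ => s t) (fun _ => hs t))
      (fun i => (hident i).comp (hs t)) k
    refine le_trans hbound ?_
    have hk' : (k:ℝ) ≤ α * ((n:ℝ)+1) := Nat.floor_le (by positivity)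
    have hle : (k:ℝ≥0∞) ≤ ENNReal.ofReal α * ((n:ℝ≥0∞)+1) := by
      calc (k:ℝ≥0∞) = ENNReal.ofReal (k:ℝ) := (ENNReal.ofReal_natCast k).symm
        _ ≤ ENNReal.ofReal (α * ((n:ℝ)+1)) := ENNReal.ofReal_le_ofReal hk'
        _ = ENNReal.ofReal α * ENNReal.ofReal ((n:ℝ)+1) :=
            ENNReal.ofReal_mul hα0.le
        _ = ENNReal.ofReal α * ((n:ℝ≥0∞)+1) := by
            rw [ENNReal.ofReal_add (Nat.cast_nonneg n) zero_le_one,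
              ENNReal.ofReal_natCast, ENNReal.ofReal_one]
    exact ENNReal.div_le_of_le_mul hle
  have hcompl : μ Gᶜ ≤ ENNReal.ofReal (1 - ptarg) := by
    calc μ Gᶜ ≤ μ (⋃ t, D t) := measure_mono hGc
      _ ≤ ∑ t, μ (D t) := measure_iUnion_fintype_le μ D
      _ ≤ ∑ _t : T, ENNReal.ofReal α := Finset.sum_le_sum fun t _ => hD t
      _ = (Fintype.card T : ℝ≥0∞) * ENNReal.ofReal α := by
          rw [Finset.sum_const, Finset.card_univ, nsmul_eq_mul]
      _ = ENNReal.ofReal ((Fintype.card T : ℝ) * α) := by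
          rw [ENNReal.ofReal_mul (le_of_lt hTpos), ENNReal.ofReal_natCast]
      _ = ENNReal.ofReal (1 - ptarg) := by
          congr 1
          rw [hαdef]
          field_simp
  have h2 : ENNReal.ofReal ptarg + ENNReal.ofReal (1 - ptarg) = 1 := by
    rw [← ENNReal.ofReal_add hp0.le (by linarith)]
    norm_num
  have h1 : (1:ℝ≥0∞) ≤ μ G + μ Gᶜ := by
    calc (1:ℝ≥0∞) = μ Set.univ := (measure_univ (μ := μ)).symm
      _ = μ (G ∪ Gᶜ) := by rw [Set.union_compl_self]
      _ ≤ μ G + μ Gᶜ := measure_union_le G Gᶜ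
  have hfinal : ENNReal.ofReal ptarg ≤ μ G := by
    have : ENNReal.ofReal ptarg = 1 - ENNReal.ofReal (1 - ptarg) := by
      rw [← h2, ENNReal.add_sub_cancel_right ENNReal.ofReal_ne_top]
    rw [this, tsub_le_iff_right]
    calc (1:ℝ≥0∞) ≤ μ G + μ Gᶜ := h1
      _ ≤ μ G + ENNReal.ofReal (1 - ptarg) := add_le_add le_rfl hcompl
  exact hfinal
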